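/- Let 1 ≤ d < n be integers, Q ∈ ℝ^{d×(n−d)}, and α ≥ β ≥ 0. Then there exists a constant C > 0, depending only on n, d, Q, α, β, such that for every k ∈ ℤ^n, written k = (k_I, k_II) with k_I ∈ ℤ^d and k_II ∈ ℤ^{n−d}, one has ‖k‖^{2β} ≤ C (‖k_I + Q k_II‖^{2α} + ‖k_II‖^{2β}), where ‖·‖ is the Euclidean norm and the convention 0⁰ = 1 is used. -/

import Mathlib

/-- Euclidean norm of a vector in `ℝ^m`. -/
noncomputable def euclNorm {m : ℕ} (x : Fin m → ℝ) : ℝ :=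
  ‖(EuclideanSpace.equiv (Fin m) ℝ).symm x‖

lemma euclNorm_nonneg {m : ℕ} (x : Fin m → ℝ) : 0 ≤ euclNorm x := norm_nonneg _

lemma euclNorm_eq {m : ℕ} (x : Fin m → ℝ) :
    euclNorm x = Real.sqrt (∑ i, x i ^ 2) := by
  simp [euclNorm, EuclideanSpace.norm_eq, Real.norm_eq_abs, sq_abs]

lemma euclNorm_sub_le {n : ℕ} (u v : Fin n → ℝ) :
    euclNorm (u - v) ≤ euclNorm u + euclNorm v := by
  unfold euclNorm
  rw [map_sub]
  exact norm_sub_le _ _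

lemma abs_le_euclNorm {n : ℕ} (x : Fin n → ℝ) (i : Fin n) : |x i| ≤ euclNorm x := by
  rw [euclNorm_eq, ← Real.sqrt_sq_eq_abs]
  apply Real.sqrt_le_sqrt
  exact Finset.single_le_sum (fun j _ => sq_nonneg (x j)) (Finset.mem_univ i)

lemma sqrt_add_le (A B : ℝ) (hA : 0 ≤ A) (hB : 0 ≤ B) :
    Real.sqrt (A + B) ≤ Real.sqrt A + Real.sqrt B := by
  have h : A + B ≤ (Real.sqrt A + Real.sqrt B) ^ 2 := by
    nlinarith [Real.sq_sqrt hA, Real.sq_sqrt hB, Real.sqrt_nonneg A, Real.sqrt_nonneg B,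
      mul_nonneg (Real.sqrt_nonneg A) (Real.sqrt_nonneg B)]
  calc Real.sqrt (A + B) ≤ Real.sqrt ((Real.sqrt A + Real.sqrt B) ^ 2) := Real.sqrt_le_sqrt h
    _ = Real.sqrt A + Real.sqrt B := Real.sqrt_sq (by positivity)

lemma euclNorm_split {d m : ℕ} (x : Fin (d + m) → ℝ) :
    euclNorm x ≤ euclNorm (fun i => x (Fin.castAdd m i)) +
      euclNorm (fun j => x (Fin.natAdd d j)) := by
  rw [euclNorm_eq, euclNorm_eq, euclNorm_eq, Fin.sum_univ_add]
  exact sqrt_add_le _ _ (Finset.sum_nonneg fun _ _ => sq_nonneg _)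
    (Finset.sum_nonneg fun _ _ => sq_nonneg _)

lemma one_le_euclNorm_int {n : ℕ} (k : Fin n → ℤ) (hk : k ≠ 0) :
    1 ≤ euclNorm (fun i => (k i : ℝ)) := by
  obtain ⟨i, hi⟩ := Function.ne_iff.mp hk
  have hi' : k i ≠ 0 := by simpa using hi
  refine le_trans ?_ (abs_le_euclNorm (fun i => (k i : ℝ)) i)
  have h1 : (1 : ℤ) ≤ |k i| := Int.one_le_abs hi'
  calc (1:ℝ) ≤ (|k i| : ℝ) := by exact_mod_cast h1
    _ = |((k i : ℤ) : ℝ)| := rfl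

lemma euclNorm_mulVec_le {d m : ℕ} (Q : Matrix (Fin d) (Fin m) ℝ) :
    ∃ N : ℝ, 0 ≤ N ∧ ∀ y : Fin m → ℝ, euclNorm (Q.mulVec y) ≤ N * euclNorm y := by
  set L := LinearMap.toContinuousLinearMap (Matrix.toEuclideanLin Q)
  refine ⟨‖L‖, norm_nonneg _, fun y => ?_⟩
  have h : (EuclideanSpace.equiv (Fin d) ℝ).symm (Q.mulVec y) =
      L ((EuclideanSpace.equiv (Fin m) ℝ).symm y) := by
    simp [L, Matrix.toLpLin_toLp, EuclideanSpace.equiv]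
  rw [euclNorm, h]
  exact le_trans (L.le_opNorm _) (le_refl _)

theorem stmt1 (d m : ℕ) (hd : 1 ≤ d) (hm : 1 ≤ m)
    (Q : Matrix (Fin d) (Fin m) ℝ) (α β : ℝ) (hβ : 0 ≤ β) (hαβ : β ≤ α) :
    ∃ C : ℝ, 0 < C ∧ ∀ k : Fin (d + m) → ℤ,
      euclNorm (fun i => (k i : ℝ)) ^ (2 * β) ≤
        C * (euclNorm ((fun i => (k (Fin.castAdd m i) : ℝ)) +
              Q.mulVec fun j => (k (Fin.natAdd d j) : ℝ)) ^ (2 * α) +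
            euclNorm (fun j => (k (Fin.natAdd d j) : ℝ)) ^ (2 * β)) := by
  obtain ⟨N, hN, hQ⟩ := euclNorm_mulVec_le Q
  set c : ℝ := N + 2 with hc
  have hc1 : (1:ℝ) ≤ c := by linarith
  have hc0 : (0:ℝ) < c := by linarith
  have hα : 0 ≤ α := le_trans hβ hαβ
  refine ⟨c ^ (2 * α), Real.rpow_pos_of_pos hc0 _, fun k => ?_⟩
  have hC1 : (1:ℝ) ≤ c ^ (2 * α) :=
    Real.one_le_rpow hc1 (by linarith)
  set y : Fin m → ℝ := fun j => (k (Fin.natAdd d j) : ℝ) with hy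
  set x : Fin d → ℝ := (fun i => (k (Fin.castAdd m i) : ℝ)) + Q.mulVec y with hx
  set a := euclNorm x with ha
  set b := euclNorm y with hb
  have ha0 : 0 ≤ a := euclNorm_nonneg _
  have hb0 : 0 ≤ b := euclNorm_nonneg _
  have hrpow_a : 0 ≤ a ^ (2 * α) := Real.rpow_nonneg ha0 _
  have hrpow_b : 0 ≤ b ^ (2 * β) := Real.rpow_nonneg hb0 _
  rcases eq_or_lt_of_le hβ with hβ0 | hβpos
  · -- β = 0
    rw [← hβ0]
    simp only [mul_zero, Real.rpow_zero]
    nlinarith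
  by_cases hk : k = 0
  · subst hk
    have : euclNorm (fun i => ((0 : Fin (d+m) → ℤ) i : ℝ)) = 0 := by
      simp [euclNorm_eq]
    rw [this, Real.zero_rpow (by positivity)]
    positivity
  -- main case
  have hK1 : 1 ≤ euclNorm (fun i => (k i : ℝ)) := one_le_euclNorm_int k hk
  set K := euclNorm (fun i => (k i : ℝ)) with hKdef
  -- K ≤ a + (N+1) b
  have hkI : euclNorm (fun i => (k (Fin.castAdd m i) : ℝ)) ≤ a + N * b := by
    have heq : (fun i => (k (Fin.castAdd m i) : ℝ)) = x - Q.mulVec y := by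
      rw [hx]; ext i; simp
    rw [heq]
    exact le_trans (euclNorm_sub_le _ _) (by have := hQ y; linarith)
  have hK : K ≤ a + (N + 1) * b := by
    have := euclNorm_split (fun i => ((k i : ℝ)))
    have hb' : euclNorm (fun j => (k (Fin.natAdd d j) : ℝ)) = b := rfl
    calc K ≤ euclNorm (fun i => (k (Fin.castAdd m i) : ℝ)) +
        euclNorm (fun j => (k (Fin.natAdd d j) : ℝ)) := this
      _ ≤ (a + N * b) + b := by rw [hb']; linarith
      _ = a + (N + 1) * b := by ring
  set M := max a b with hM
  have hM0 : 0 ≤ M := le_trans ha0 (le_max_left _ _)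
  have haM : a ≤ M := le_max_left _ _
  have hbM : b ≤ M := le_max_right _ _
  have hKM : K ≤ c * M := by
    calc K ≤ a + (N + 1) * b := hK
      _ ≤ M + (N + 1) * M := by nlinarith
      _ = c * M := by rw [hc]; ring
  have hMc : 1 / c ≤ M := by
    rw [div_le_iff₀ hc0]
    nlinarith
  have hβ2 : 0 ≤ 2 * β := by linarith
  -- K^(2β) ≤ c^(2β) * M^(2β)
  have step1 : K ^ (2 * β) ≤ c ^ (2 * β) * M ^ (2 * β) := by
    rw [← Real.mul_rpow (le_of_lt hc0) hM0]
    exact Real.rpow_le_rpow (by linarith) hKM hβ2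
  -- M^(2β) ≤ c^(2(α-β)) * a^(2α) + b^(2β)
  have step2 : M ^ (2 * β) ≤ c ^ (2 * (α - β)) * a ^ (2 * α) + b ^ (2 * β) := by
    rcases le_total b a with hba | hab
    · have hMa : M = a := max_eq_left hba
      rw [hMa]
      have hca : 1 / c ≤ a := hMa ▸ hMc
      have ha0' : 0 < a := lt_of_lt_of_le (by positivity) hca
      have key : a ^ (2 * β) ≤ c ^ (2 * (α - β)) * a ^ (2 * α) := by
        have h1 : a ^ (2 * α) = a ^ (2 * β) * a ^ (2 * (α - β)) := by
          rw [← Real.rpow_add ha0']; ring_nf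
        have h2 : (1 / c) ^ (2 * (α - β)) ≤ a ^ (2 * (α - β)) :=
          Real.rpow_le_rpow (by positivity) hca (by linarith)
        have h3 : (1 / c) ^ (2 * (α - β)) * c ^ (2 * (α - β)) = 1 := by
          rw [← Real.mul_rpow (by positivity) (le_of_lt hc0)]
          rw [one_div_mul_cancel (ne_of_gt hc0), Real.one_rpow]
        have h4 : 0 ≤ a ^ (2 * β) := Real.rpow_nonneg (le_of_lt ha0') _
        have h5 : 0 < c ^ (2 * (α - β)) := Real.rpow_pos_of_pos hc0 _
        nlinarith [mul_le_mul_of_nonneg_left h2 h4]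
      linarith
    · have hMb : M = b := max_eq_right hab
      rw [hMb]
      have : 0 ≤ c ^ (2 * (α - β)) * a ^ (2 * α) := by positivity
      linarith
  have hcβα : c ^ (2 * β) ≤ c ^ (2 * α) :=
    Real.rpow_le_rpow_of_exponent_le hc1 (by linarith)
  have hfinal : c ^ (2 * β) * c ^ (2 * (α - β)) = c ^ (2 * α) := by
    rw [← Real.rpow_add hc0]; ring_nf
  have hcβ0 : 0 < c ^ (2 * β) := Real.rpow_pos_of_pos hc0 _
  calc K ^ (2 * β) ≤ c ^ (2 * β) * M ^ (2 * β) := step1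
    _ ≤ c ^ (2 * β) * (c ^ (2 * (α - β)) * a ^ (2 * α) + b ^ (2 * β)) :=
        mul_le_mul_of_nonneg_left step2 (le_of_lt hcβ0)
    _ = c ^ (2 * α) * a ^ (2 * α) + c ^ (2 * β) * b ^ (2 * β) := by
        rw [mul_add, ← mul_assoc, hfinal]
    _ ≤ c ^ (2 * α) * (a ^ (2 * α) + b ^ (2 * β)) := by
        rw [mul_add]
        have := mul_le_mul_of_nonneg_right hcβα hrpow_b
        linarith
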